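/- Let N ≥ 1, k ∈ {1,...,N}, set μ = (5 − 4cos(kπ/(N+1)))^{1/2}, s_j = sin(jπ/(N+1)) notation s_{nk} = sin(nkπ/(N+1)). Define φ_{2n} = μ s_{nk}/(2 s_k) for n = 1,...,N and φ_{2n+1} = s_{nk}/(2 s_k) − s_{(n+1)k}/s_k for n = 0,...,N. Then Σ_{n=1}^{N} φ_{2n}² = μ²(N+1)/(8 s_k²), Σ_{n=0}^{N} φ_{2n+1}² = μ²(N+1)/(8 s_k²), and the total sum equals μ²(N+1)/(4 s_k²). -/

import Mathlib

open Finset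

-- key: for θ = kπ/(N+1), 1 ≤ k ≤ N, sums of cos(n·2θ) and cos((2n+1)θ) vanish
lemma aux_exp_sum (N k : ℕ) (hk1 : 1 ≤ k) (hkN : k ≤ N) :
    ∑ n ∈ Finset.range (N+1),
      Complex.exp ((2*((k:ℝ)*Real.pi/(N+1)) : ℝ) * Complex.I) ^ n = 0 := by
  set θ : ℝ := (k:ℝ)*Real.pi/(N+1) with hθ
  set z : ℂ := Complex.exp ((2*θ : ℝ) * Complex.I) with hz
  have hN1 : ((N:ℝ)+1) ≠ 0 := by positivity
  have hNθ : ((N:ℝ)+1) * θ = k * Real.pi := by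
    rw [hθ]; field_simp
  have hzpow : z ^ (N+1) = 1 := by
    rw [hz, ← Complex.exp_nat_mul]
    have : ((N+1 : ℕ) : ℂ) * (((2*θ:ℝ):ℂ) * Complex.I) = (k:ℤ) * (2*Real.pi*Complex.I) := by
      push_cast
      rw [show ((N:ℂ)+1) * (2*(θ:ℂ) * Complex.I) = (((N:ℝ)+1)*θ : ℝ) * (2*Complex.I) by push_cast; ring]
      rw [hNθ]
      push_cast; ring
    rw [this, Complex.exp_int_mul_two_pi_mul_I]
  have hzne : z ≠ 1 := by
    intro h
    rw [hz, Complex.exp_eq_one_iff] at h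
    obtain ⟨n, hn⟩ := h
    have hI : ((2*θ:ℝ):ℂ) = n * (2*Real.pi) := by
      apply mul_right_cancel₀ Complex.I_ne_zero
      rw [hn]; ring
    have hr : 2*θ = (n:ℝ) * (2*Real.pi) := by
      exact_mod_cast hI
    have hθpos : 0 < θ := by
      apply div_pos (by positivity : (0:ℝ) < (k:ℝ)*Real.pi) (by positivity)
    have hθlt : θ < Real.pi := by
      rw [hθ, div_lt_iff₀ (by positivity)]
      have : (k:ℝ) < (N:ℝ)+1 := by exact_mod_cast Nat.lt_succ_of_le hkN
      nlinarith [Real.pi_pos]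
    have hn0 : (0:ℝ) < n := by nlinarith [Real.pi_pos]
    have hn1 : (n:ℝ) < 1 := by nlinarith [Real.pi_pos]
    have : (0:ℤ) < n := by exact_mod_cast hn0
    have : n < 1 := by exact_mod_cast hn1
    omega
  have := geom_sum_eq hzne (N+1)
  rw [this, hzpow]
  simp

lemma aux_cos_sum (N k : ℕ) (hk1 : 1 ≤ k) (hkN : k ≤ N) :
    ∑ n ∈ Finset.range (N+1), Real.cos ((n:ℝ) * (2*((k:ℝ)*Real.pi/(N+1)))) = 0 := by
  have h := aux_exp_sum N k hk1 hkN
  have h2 : (∑ n ∈ Finset.range (N+1),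
      Complex.exp ((2*((k:ℝ)*Real.pi/(N+1)) : ℝ) * Complex.I) ^ n).re = 0 := by
    rw [h]; simp
  rw [← h2, Complex.re_sum]
  apply Finset.sum_congr rfl
  intro n _
  rw [← Complex.exp_nat_mul]
  rw [show ((n:ℂ)) * (((2*((k:ℝ)*Real.pi/(N+1)) : ℝ) : ℂ) * Complex.I)
      = (((n:ℝ) * (2*((k:ℝ)*Real.pi/(N+1))) : ℝ) : ℂ) * Complex.I by push_cast; ring]
  rw [Complex.exp_ofReal_mul_I_re]

lemma aux_cos_odd_sum (N k : ℕ) (hk1 : 1 ≤ k) (hkN : k ≤ N) :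
    ∑ n ∈ Finset.range (N+1),
      Real.cos ((2*(n:ℝ)+1) * ((k:ℝ)*Real.pi/(N+1))) = 0 := by
  set θ : ℝ := (k:ℝ)*Real.pi/(N+1) with hθ
  have h := aux_exp_sum N k hk1 hkN
  have h2 : (Complex.exp ((θ:ℝ) * Complex.I) * ∑ n ∈ Finset.range (N+1),
      Complex.exp ((2*θ : ℝ) * Complex.I) ^ n).re = 0 := by
    rw [h]; simp
  rw [Finset.mul_sum, Complex.re_sum] at h2
  rw [← h2]
  apply Finset.sum_congr rfl
  intro n _
  rw [← Complex.exp_nat_mul, ← Complex.exp_add]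
  rw [show ((θ:ℝ):ℂ) * Complex.I + (n:ℂ) * (((2*θ : ℝ):ℂ) * Complex.I)
      = (((2*(n:ℝ)+1) * θ : ℝ) : ℂ) * Complex.I by push_cast; ring]
  rw [Complex.exp_ofReal_mul_I_re]

lemma aux_sin_sq_sum (N k : ℕ) (hk1 : 1 ≤ k) (hkN : k ≤ N) :
    ∑ n ∈ Finset.range (N+1), Real.sin ((n:ℝ) * ((k:ℝ)*Real.pi/(N+1))) ^ 2
      = ((N:ℝ)+1)/2 := by
  have h := aux_cos_sum N k hk1 hkN
  have : ∀ n : ℕ, Real.sin ((n:ℝ) * ((k:ℝ)*Real.pi/(N+1))) ^ 2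
      = 1/2 - Real.cos ((n:ℝ) * (2*((k:ℝ)*Real.pi/(N+1))))/2 := by
    intro n
    rw [Real.sin_sq_eq_half_sub]
    ring_nf
  simp only [this]
  rw [Finset.sum_sub_distrib, Finset.sum_const, ← Finset.sum_div, h]
  simp
  ring

lemma aux_sin_prod_sum (N k : ℕ) (hk1 : 1 ≤ k) (hkN : k ≤ N) :
    ∑ n ∈ Finset.range (N+1),
      Real.sin ((n:ℝ) * ((k:ℝ)*Real.pi/(N+1)))
        * Real.sin (((n:ℝ)+1) * ((k:ℝ)*Real.pi/(N+1)))
      = ((N:ℝ)+1) * Real.cos ((k:ℝ)*Real.pi/(N+1)) / 2 := by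
  set θ : ℝ := (k:ℝ)*Real.pi/(N+1) with hθ
  have h := aux_cos_odd_sum N k hk1 hkN
  have key : ∀ n : ℕ, Real.sin ((n:ℝ) * θ) * Real.sin (((n:ℝ)+1) * θ)
      = Real.cos θ / 2 - Real.cos ((2*(n:ℝ)+1) * θ) / 2 := by
    intro n
    have := Real.cos_sub_cos θ ((2*(n:ℝ)+1) * θ)
    have e1 : (θ + (2*(n:ℝ)+1)*θ)/2 = ((n:ℝ)+1)*θ := by ring
    have e2 : (θ - (2*(n:ℝ)+1)*θ)/2 = -((n:ℝ)*θ) := by ring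
    rw [e1, e2, Real.sin_neg] at this
    linarith
  simp only [key]
  rw [Finset.sum_sub_distrib, Finset.sum_const, ← Finset.sum_div, h]
  simp
  ring

/-- Sums of squares of the fundamental solutions at `a = 2`, `λ = μ = (5-4c_k)^{1/2}`:
even-index part and odd-index part each equal `μ²(N+1)/(8 s_k²)`, the total being
`μ²(N+1)/(4 s_k²)`. -/
theorem sum_of_squares_at_two (N k : ℕ) (hN : 1 ≤ N) (hk : k ∈ Finset.Icc 1 N) :
    (∑ n ∈ Finset.Icc 1 N,
        (Real.sqrt (5 - 4*Real.cos ((k : ℝ)*Real.pi/(N+1)))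
          * Real.sin ((n : ℝ)*(k : ℝ)*Real.pi/(N+1))
          / (2 * Real.sin ((k : ℝ)*Real.pi/(N+1))))^2)
      = (Real.sqrt (5 - 4*Real.cos ((k : ℝ)*Real.pi/(N+1))))^2 * (N+1)
          / (8 * (Real.sin ((k : ℝ)*Real.pi/(N+1)))^2) ∧
    (∑ n ∈ Finset.range (N+1),
        (Real.sin ((n : ℝ)*(k : ℝ)*Real.pi/(N+1))
            / (2 * Real.sin ((k : ℝ)*Real.pi/(N+1)))
          - Real.sin (((n : ℝ)+1)*(k : ℝ)*Real.pi/(N+1))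
            / Real.sin ((k : ℝ)*Real.pi/(N+1)))^2)
      = (Real.sqrt (5 - 4*Real.cos ((k : ℝ)*Real.pi/(N+1))))^2 * (N+1)
          / (8 * (Real.sin ((k : ℝ)*Real.pi/(N+1)))^2) ∧
    (∑ n ∈ Finset.Icc 1 N,
        (Real.sqrt (5 - 4*Real.cos ((k : ℝ)*Real.pi/(N+1)))
          * Real.sin ((n : ℝ)*(k : ℝ)*Real.pi/(N+1))
          / (2 * Real.sin ((k : ℝ)*Real.pi/(N+1))))^2)
    + (∑ n ∈ Finset.range (N+1),
        (Real.sin ((n : ℝ)*(k : ℝ)*Real.pi/(N+1))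
            / (2 * Real.sin ((k : ℝ)*Real.pi/(N+1)))
          - Real.sin (((n : ℝ)+1)*(k : ℝ)*Real.pi/(N+1))
            / Real.sin ((k : ℝ)*Real.pi/(N+1)))^2)
      = (Real.sqrt (5 - 4*Real.cos ((k : ℝ)*Real.pi/(N+1))))^2 * (N+1)
          / (4 * (Real.sin ((k : ℝ)*Real.pi/(N+1)))^2) := by
  obtain ⟨hk1, hkN⟩ := Finset.mem_Icc.mp hk
  have harg : ∀ x : ℝ, x*(k:ℝ)*Real.pi/((N:ℝ)+1) = x*((k:ℝ)*Real.pi/((N:ℝ)+1)) := by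
    intro x; ring
  simp only [harg]
  set θ : ℝ := (k:ℝ)*Real.pi/((N:ℝ)+1) with hθ
  -- positivity facts
  have hθpos : 0 < θ := by
    rw [hθ]
    apply div_pos (by positivity) (by positivity)
  have hθlt : θ < Real.pi := by
    rw [hθ, div_lt_iff₀ (by positivity)]
    have : (k:ℝ) < (N:ℝ)+1 := by exact_mod_cast Nat.lt_succ_of_le hkN
    nlinarith [Real.pi_pos]
  have hs : 0 < Real.sin θ := Real.sin_pos_of_pos_of_lt_pi hθpos hθlt
  have hsne : Real.sin θ ≠ 0 := ne_of_gt hs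
  have hA : Real.sqrt (5 - 4*Real.cos θ)^2 = 5 - 4*Real.cos θ :=
    Real.sq_sqrt (by nlinarith [Real.cos_le_one θ])
  -- key sums
  have S1 : ∑ n ∈ Finset.range (N+1), Real.sin ((n:ℝ)*θ)^2 = ((N:ℝ)+1)/2 :=
    aux_sin_sq_sum N k hk1 hkN
  have S2 : ∑ n ∈ Finset.range (N+1),
      Real.sin ((n:ℝ)*θ) * Real.sin (((n:ℝ)+1)*θ) = ((N:ℝ)+1) * Real.cos θ / 2 :=
    aux_sin_prod_sum N k hk1 hkN
  have hlast : Real.sin (((N:ℝ)+1)*θ)^2 = 0 := by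
    have e : ((N:ℝ)+1)*θ = (k:ℝ)*Real.pi := by
      rw [hθ]; field_simp
    rw [e, Real.sin_nat_mul_pi]
    simp
  have Sshift : ∑ n ∈ Finset.range (N+1), Real.sin (((n:ℝ)+1)*θ)^2 = ((N:ℝ)+1)/2 := by
    have h1 := Finset.sum_range_succ' (fun n : ℕ => Real.sin ((n:ℝ)*θ)^2) (N+1)
    have h2 := Finset.sum_range_succ (fun n : ℕ => Real.sin ((n:ℝ)*θ)^2) (N+1)
    push_cast at h1 h2
    rw [h2, S1, hlast] at h1
    simp at h1
    rw [← h1]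
  -- even-indexed sum
  have hIcc : ∑ n ∈ Finset.Icc 1 N,
        (Real.sqrt (5 - 4*Real.cos θ) * Real.sin ((n:ℝ)*θ) / (2 * Real.sin θ))^2
      = ∑ n ∈ Finset.range (N+1),
        (Real.sqrt (5 - 4*Real.cos θ) * Real.sin ((n:ℝ)*θ) / (2 * Real.sin θ))^2 := by
    apply Finset.sum_subset
    · intro x hx
      simp only [Finset.mem_Icc] at hx
      simp only [Finset.mem_range]
      omega
    · intro x hx hnx
      simp only [Finset.mem_Icc, Finset.mem_range] at hx hnx
      have : x = 0 := by omega
      subst this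
      simp
  have hE : ∑ n ∈ Finset.Icc 1 N,
        (Real.sqrt (5 - 4*Real.cos θ) * Real.sin ((n:ℝ)*θ) / (2 * Real.sin θ))^2
      = Real.sqrt (5 - 4*Real.cos θ)^2 * ((N:ℝ)+1) / (8 * Real.sin θ^2) := by
    rw [hIcc]
    have : ∀ n : ℕ, (Real.sqrt (5 - 4*Real.cos θ) * Real.sin ((n:ℝ)*θ) / (2 * Real.sin θ))^2
        = (5 - 4*Real.cos θ) / (4 * Real.sin θ^2) * Real.sin ((n:ℝ)*θ)^2 := by
      intro n
      rw [div_pow, mul_pow, hA, mul_pow]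
      ring
    simp only [this]
    rw [← Finset.mul_sum, S1, hA]
    ring
  have hO : ∑ n ∈ Finset.range (N+1),
        (Real.sin ((n:ℝ)*θ) / (2 * Real.sin θ) - Real.sin (((n:ℝ)+1)*θ) / Real.sin θ)^2
      = Real.sqrt (5 - 4*Real.cos θ)^2 * ((N:ℝ)+1) / (8 * Real.sin θ^2) := by
    have : ∀ n : ℕ, (Real.sin ((n:ℝ)*θ) / (2 * Real.sin θ) - Real.sin (((n:ℝ)+1)*θ) / Real.sin θ)^2
        = Real.sin ((n:ℝ)*θ)^2 / (4 * Real.sin θ^2)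
          - Real.sin ((n:ℝ)*θ) * Real.sin (((n:ℝ)+1)*θ) / Real.sin θ^2
          + Real.sin (((n:ℝ)+1)*θ)^2 / Real.sin θ^2 := by
      intro n
      field_simp
      ring
    simp only [this]
    rw [Finset.sum_add_distrib, Finset.sum_sub_distrib, ← Finset.sum_div, ← Finset.sum_div,
      ← Finset.sum_div, S1, S2, Sshift, hA]
    field_simp
    ring
  refine ⟨hE, hO, ?_⟩
  rw [hE, hO]
  field_simp
  ring
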